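/- Let R be a commutative ring, p ⊂ R a prime ideal, A an Azumaya R-algebra, and set Ā = A/pA. If N ⊆ Ā is a nonzero finitely generated left Ā-submodule, then the two-sided annihilator {x ∈ Ā : xN = 0} is zero. -/

import Mathlib

open scoped TensorProduct

universe u v

/-- An Azumaya algebra over a commutative ring `R`: an `R`-algebra which is finitely
generated, projective and faithful as an `R`-module, and such that
`A ⊗[R] Aᵐᵒᵖ ≅ End_R(A)` as `R`-algebras. -/
def IsAzumayaAlg (R : Type u) (A : Type v) [CommRing R] [Ring A] [Algebra R A] : Prop :=
  Module.Finite R A ∧ Module.Projective R A ∧ FaithfulSMul R A ∧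
    Nonempty ((A ⊗[R] Aᵐᵒᵖ) ≃ₐ[R] Module.End R A)

lemma isSimpleRing_of_ringEquiv {R S : Type*} [NonAssocRing R] [NonAssocRing S] (e : R ≃+* S)
    [IsSimpleRing S] : IsSimpleRing R := by
  haveI : Nontrivial R := e.toEquiv.nontrivial
  refine IsSimpleRing.of_eq_bot_or_eq_top fun I => ?_
  let J : TwoSidedIdeal S := I.comap (e.symm : S →+* R)
  rcases IsSimpleRing.simple.eq_bot_or_eq_top J with h | h
  · left
    refine SetLike.ext fun x => ⟨fun hx => ?_, fun hx => ?_⟩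
    · have : e x ∈ J := by
        simp only [J, TwoSidedIdeal.mem_comap]
        simpa using hx
      rw [h, TwoSidedIdeal.mem_bot] at this
      rw [TwoSidedIdeal.mem_bot]
      have := congrArg e.symm this
      simpa using this
    · rw [TwoSidedIdeal.mem_bot] at hx
      subst hx; exact TwoSidedIdeal.zero_mem I
  · right
    refine SetLike.ext fun x => ⟨fun _ => TwoSidedIdeal.mem_top _, fun _ => ?_⟩
    have : e x ∈ (⊤ : TwoSidedIdeal S) := TwoSidedIdeal.mem_top _
    rw [← h] at this
    simpa [J, TwoSidedIdeal.mem_comap] using this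

set_option maxHeartbeats 1000000 in
set_option synthInstance.maxHeartbeats 100000 in
/-- Multiplicative upgrade of `AlgebraTensorModule.cancelBaseChange`. -/
noncomputable def cancelAlgEquiv (R S C D : Type*) [CommRing R] [CommRing S] [Algebra R S]
    [Ring C] [Algebra S C] [Algebra R C] [IsScalarTower R S C]
    [Ring D] [Algebra R D] :
    C ⊗[S] (S ⊗[R] D) ≃ₐ[S] C ⊗[R] D := by
  let e := TensorProduct.AlgebraTensorModule.cancelBaseChange R S S C D
  have key : ∀ (c c' : C) (z z' : S ⊗[R] D),
      e ((c ⊗ₜ[S] z) * (c' ⊗ₜ[S] z')) = e (c ⊗ₜ[S] z) * e (c' ⊗ₜ[S] z') := by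
    intro c c' z z'
    induction z with
    | zero =>
      rw [TensorProduct.tmul_zero, zero_mul, LinearEquiv.map_zero, zero_mul]
    | add a b ha hb =>
      rw [TensorProduct.tmul_add, add_mul, LinearEquiv.map_add, LinearEquiv.map_add, add_mul,
        ha, hb]
    | tmul s d =>
      induction z' with
      | zero =>
        rw [TensorProduct.tmul_zero, mul_zero, LinearEquiv.map_zero, mul_zero]
      | add a b ha hb =>
        rw [TensorProduct.tmul_add, mul_add, LinearEquiv.map_add, LinearEquiv.map_add, mul_add,
          ha, hb]
      | tmul s' d' =>
        simp only [e, Algebra.TensorProduct.tmul_mul_tmul,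
          TensorProduct.AlgebraTensorModule.cancelBaseChange_tmul]
        rw [smul_mul_smul_comm]
  refine AlgEquiv.ofLinearEquiv e ?_ ?_
  · show e ((1 : C) ⊗ₜ[S] ((1 : S) ⊗ₜ[R] (1 : D))) = 1
    simp only [e, TensorProduct.AlgebraTensorModule.cancelBaseChange_tmul, one_smul]
    rfl
  · intro x y
    induction x with
    | zero => rw [zero_mul, LinearEquiv.map_zero, zero_mul]
    | add a b ha hb =>
      rw [add_mul, LinearEquiv.map_add, LinearEquiv.map_add, add_mul, ha, hb]
    | tmul c z =>
      induction y with
      | zero => rw [mul_zero, LinearEquiv.map_zero, mul_zero]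
      | add a b ha hb =>
        rw [mul_add, LinearEquiv.map_add, LinearEquiv.map_add, mul_add, ha, hb]
      | tmul c' z' => exact key c c' z z'


section Psi

variable {R : Type u} [CommRing R] (S : Submonoid R)
variable (R' : Type u) [CommRing R'] [Algebra R R'] [IsLocalization S R']
variable (A : Type v) [AddCommGroup A] [Module R A] [Module.FinitePresentation R A]

noncomputable def endBaseChangeEquiv :
    (R' ⊗[R] Module.End R A) ≃ₐ[R'] Module.End R' (R' ⊗[R] A) := by
  let mkl : A →ₗ[R] R' ⊗[R] A := TensorProduct.mk R R' A 1
  haveI hLM : IsLocalizedModule S mkl :=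
    (isLocalizedModule_iff_isBaseChange S R' mkl).mpr (TensorProduct.isBaseChange R A R')
  let ν : Module.End R A →ₗ[R] Module.End R' (R' ⊗[R] A) :=
    IsLocalizedModule.mapExtendScalars S mkl mkl R'
  have ext1 : ∀ {φ ψ : R' ⊗[R] A →ₗ[R'] R' ⊗[R] A},
      (∀ a : A, φ ((1:R') ⊗ₜ[R] a) = ψ ((1:R') ⊗ₜ[R] a)) → φ = ψ := by
    intro φ ψ h
    ext x
    exact h x
  have key : ∀ (h : Module.End R A) (a : A), ν h ((1:R') ⊗ₜ[R] a) = (1:R') ⊗ₜ[R] (h a) := by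
    intro h a
    show ν h (mkl a) = mkl (h a)
    simp only [ν, IsLocalizedModule.mapExtendScalars_apply_apply]
    exact IsLocalizedModule.map_apply S mkl mkl h a
  have νmul : ∀ h₁ h₂ : Module.End R A, ν (h₁ * h₂) = ν h₁ * ν h₂ := by
    intro h₁ h₂
    refine ext1 fun a => ?_
    rw [key, Module.End.mul_apply, Module.End.mul_apply, key, key]
  have νone : ν 1 = 1 := by
    refine ext1 fun a => ?_
    rw [key, Module.End.one_apply, Module.End.one_apply]
  have hBC : IsBaseChange R' ν := (isLocalizedModule_iff_isBaseChange S R' ν).mp inferInstance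
  refine AlgEquiv.ofLinearEquiv hBC.equiv ?_ ?_
  · show hBC.equiv ((1:R') ⊗ₜ[R] (1 : Module.End R A)) = 1
    rw [hBC.equiv_tmul, one_smul, νone]
  · intro x y
    induction x with
    | zero => rw [zero_mul, LinearEquiv.map_zero, zero_mul]
    | add a b ha hb =>
      rw [add_mul, LinearEquiv.map_add, LinearEquiv.map_add, add_mul, ha, hb]
    | tmul s h =>
      induction y with
      | zero => rw [mul_zero, LinearEquiv.map_zero, mul_zero]
      | add a b ha hb =>
        rw [mul_add, LinearEquiv.map_add, LinearEquiv.map_add, mul_add, ha, hb]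
      | tmul t h' =>
        rw [Algebra.TensorProduct.tmul_mul_tmul, hBC.equiv_tmul, hBC.equiv_tmul,
          hBC.equiv_tmul, νmul, smul_mul_smul_comm]

end Psi


lemma one_tmul_eq_zero_iff {R : Type u} [CommRing R] (p : Ideal R) {k : Type*} [CommRing k]
    [Algebra R k] (hk : RingHom.ker (algebraMap R k) = p) {A : Type v} [AddCommGroup A]
    [Module R A] [Module.Flat R A] (a : A) :
    (1:k) ⊗ₜ[R] a = 0 ↔ a ∈ p • (⊤ : Submodule R A) := by
  constructor
  · intro hz
    -- the factorization
    let ιa : (R ⧸ p) →ₐ[R] k := Ideal.Quotient.liftₐ p (Algebra.ofId R k) (fun r hr => by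
      have : r ∈ RingHom.ker (algebraMap R k) := hk ▸ hr
      exact RingHom.mem_ker.mp this)
    let ι : (R ⧸ p) →ₗ[R] k := ιa.toLinearMap
    have hι_inj : Function.Injective ι := by
      intro x y hxy
      obtain ⟨x, rfl⟩ := Ideal.Quotient.mk_surjective x
      obtain ⟨y, rfl⟩ := Ideal.Quotient.mk_surjective y
      have : algebraMap R k (x - y) = 0 := by
        have hx : ι (Ideal.Quotient.mk p x) = algebraMap R k x := rfl
        have hy : ι (Ideal.Quotient.mk p y) = algebraMap R k y := rfl
        rw [map_sub, ← hx, ← hy, hxy, sub_self]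
      have hmem : x - y ∈ p := hk ▸ RingHom.mem_ker.mpr this
      rw [Ideal.Quotient.mk_eq_mk_iff_sub_mem]
      exact hmem
    have hfac : (Algebra.linearMap R k) = ι ∘ₗ p.mkQ := by
      ext r; rfl
    have h1 : ((Algebra.linearMap R k).rTensor A) ((1:R) ⊗ₜ[R] a) = (1:k) ⊗ₜ[R] a := by
      rw [LinearMap.rTensor_tmul]
      simp
    have h2 : ((p.mkQ).rTensor A) ((1:R) ⊗ₜ[R] a) = 0 := by
      apply Module.Flat.rTensor_preserves_injective_linearMap ι hι_inj
      rw [LinearMap.map_zero]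
      rw [← LinearMap.rTensor_comp_apply, ← hfac, h1, hz]
    have hexact : Function.Exact ((p : Submodule R R).subtype.rTensor A) ((p.mkQ).rTensor A) :=
      rTensor_exact A (LinearMap.exact_subtype_mkQ (p : Submodule R R)) (Submodule.mkQ_surjective _)
    obtain ⟨ξ, hξ⟩ := hexact ((1:R) ⊗ₜ[R] a) |>.mp h2
    have claim : ∀ ξ : (p : Submodule R R) ⊗[R] A,
        (TensorProduct.lid R A) (((p : Submodule R R).subtype.rTensor A) ξ)
          ∈ p • (⊤ : Submodule R A) := by
      intro ξ
      induction ξ with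
      | zero => simp
      | add x y hx hy => rw [map_add, map_add]; exact Submodule.add_mem _ hx hy
      | tmul r x =>
        rw [LinearMap.rTensor_tmul]
        simpa using Submodule.smul_mem_smul r.2 (Submodule.mem_top : x ∈ ⊤)
    have := claim ξ
    rw [hξ] at this
    simpa using this
  · intro ha
    refine Submodule.smul_induction_on ha ?_ ?_
    · intro r hr x _
      have hr0 : algebraMap R k r = 0 := RingHom.mem_ker.mp (hk ▸ hr :)
      rw [TensorProduct.tmul_smul, TensorProduct.smul_tmul', Algebra.smul_def, mul_one, hr0,
        TensorProduct.zero_tmul]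
    · intro x y hx hy
      rw [TensorProduct.tmul_add, hx, hy, add_zero]

lemma mem_span_algebraMap_image_iff {R : Type u} [CommRing R] (p : Ideal R) {A : Type v} [Ring A]
    [Algebra R A] (a : A) :
    a ∈ Ideal.span (algebraMap R A '' (p : Set R)) ↔ a ∈ p • (⊤ : Submodule R A) := by
  constructor
  · intro h
    have hclosed : ∀ x ∈ p • (⊤ : Submodule R A), ∀ c : A, c • x ∈ p • (⊤ : Submodule R A) := by
      intro x hx c
      refine Submodule.smul_induction_on hx ?_ ?_
      · intro r hr n _
        rw [smul_comm]
        exact Submodule.smul_mem_smul hr Submodule.mem_top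
      · intro y z hy hz
        rw [smul_add]
        exact Submodule.add_mem _ hy hz
    refine Submodule.span_induction ?_ ?_ ?_ ?_ h
    · rintro x ⟨r, hr, rfl⟩
      have : algebraMap R A r = r • (1 : A) := by
        rw [Algebra.smul_def, mul_one]
      rw [this]
      exact Submodule.smul_mem_smul hr Submodule.mem_top
    · exact Submodule.zero_mem _
    · intro x y _ _ hx hy; exact Submodule.add_mem _ hx hy
    · intro c x _ hx; exact hclosed x hx c
  · intro h
    refine Submodule.smul_induction_on h ?_ ?_
    · intro r hr n _
      rw [Algebra.smul_def, Algebra.commutes]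
      exact Ideal.mul_mem_left _ n (Ideal.subset_span ⟨r, hr, rfl⟩)
    · intro x y hx hy
      exact Ideal.add_mem _ hx hy

section FieldLemmas

variable {k : Type*} [Field k] {B : Type*} [Ring B] [Algebra k B]

lemma exists_dual_ne_zero {V : Type*} [AddCommGroup V] [Module k V] {x : V} (hx : x ≠ 0) :
    ∃ f : V →ₗ[k] k, f x ≠ 0 := by
  by_contra h
  push_neg at h
  exact hx ((Module.forall_dual_apply_eq_zero_iff k x).mp h)

lemma tmul_one_ne_zero {C : Type*} [Ring C] [Algebra k C] [Nontrivial C]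
    {x : B} (hx : x ≠ 0) : x ⊗ₜ[k] (1:C) ≠ 0 := by
  obtain ⟨f, hf⟩ := exists_dual_ne_zero (k := k) hx
  intro h0
  have h1 : f x • (1:C) = 0 := by
    have := congrArg (fun z => (TensorProduct.lid k C) ((f.rTensor C) z)) h0
    simpa using this
  have h2 : ((f x)⁻¹ * f x) • (1:C) = 0 := by rw [mul_smul, h1, smul_zero]
  rw [inv_mul_cancel₀ hf, one_smul] at h2
  exact one_ne_zero h2

lemma eq_zero_of_forall_mul_mul_eq_zero [IsSimpleRing (B ⊗[k] Bᵐᵒᵖ)] {u w : B} (hw : w ≠ 0)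
    (hu : ∀ b : B, u * b * w = 0) : u = 0 := by
  haveI : Nontrivial B := nontrivial_of_ne w 0 hw
  by_contra hu0
  let J : Submodule k B :=
    { carrier := {v | ∀ b : B, v * b * w = 0}
      add_mem' := fun hv hv' => fun b => by
        rw [add_mul, add_mul, hv b, hv' b, add_zero]
      zero_mem' := fun b => by rw [zero_mul, zero_mul]
      smul_mem' := fun c v hv => fun b => by
        rw [smul_mul_assoc, smul_mul_assoc, hv b, smul_zero] }
  have hmemJ : ∀ v : B, v ∈ J ↔ ∀ b : B, v * b * w = 0 := fun _ => Iff.rfl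
  have h1J : (1:B) ∉ J := by
    intro h
    have := h 1
    rw [one_mul, one_mul] at this
    exact hw this
  have huJ : u ∈ J := hu
  -- a functional vanishing on `J` but not at `1`
  have hq1 : J.mkQ (1:B) ≠ 0 := by
    rw [Submodule.mkQ_apply, ne_eq, Submodule.Quotient.mk_eq_zero]
    exact h1J
  obtain ⟨g, hg⟩ := exists_dual_ne_zero (k := k) hq1
  let f : B →ₗ[k] k := g ∘ₗ J.mkQ
  have hf1 : f (1:B) ≠ 0 := hg
  have hfJ : f ∘ₗ J.subtype = 0 := by
    ext ⟨j, hj⟩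
    show g (J.mkQ j) = 0
    rw [Submodule.mkQ_apply, (Submodule.Quotient.mk_eq_zero J).mpr hj, map_zero]
  -- the two-sided ideal J ⊗ Bᵐᵒᵖ
  let W : Submodule k (B ⊗[k] Bᵐᵒᵖ) := LinearMap.range (J.subtype.rTensor Bᵐᵒᵖ)
  have hW_left : ∀ t ∈ W, ∀ s : B ⊗[k] Bᵐᵒᵖ, s * t ∈ W := by
    rintro t ⟨ξ, rfl⟩ s
    induction ξ with
    | zero => rw [map_zero, mul_zero]; exact Submodule.zero_mem _
    | add a b ha hb => rw [map_add, mul_add]; exact Submodule.add_mem _ ha hb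
    | tmul j b =>
      rw [LinearMap.rTensor_tmul]
      induction s with
      | zero => rw [zero_mul]; exact Submodule.zero_mem _
      | add s₁ s₂ hs₁ hs₂ => rw [add_mul]; exact Submodule.add_mem _ hs₁ hs₂
      | tmul x y =>
        rw [Algebra.TensorProduct.tmul_mul_tmul]
        refine ⟨(⟨x * (j : B), fun c => ?_⟩ : J) ⊗ₜ[k] (y * b), ?_⟩
        · rw [mul_assoc x (j : B) c, mul_assoc x ((j : B) * c) w, j.2 c, mul_zero]
        · rw [LinearMap.rTensor_tmul]; rfl
  have hW_right : ∀ t ∈ W, ∀ s : B ⊗[k] Bᵐᵒᵖ, t * s ∈ W := by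
    rintro t ⟨ξ, rfl⟩ s
    induction ξ with
    | zero => rw [map_zero, zero_mul]; exact Submodule.zero_mem _
    | add a b ha hb => rw [map_add, add_mul]; exact Submodule.add_mem _ ha hb
    | tmul j b =>
      rw [LinearMap.rTensor_tmul]
      induction s with
      | zero => rw [mul_zero]; exact Submodule.zero_mem _
      | add s₁ s₂ hs₁ hs₂ => rw [mul_add]; exact Submodule.add_mem _ hs₁ hs₂
      | tmul x y =>
        rw [Algebra.TensorProduct.tmul_mul_tmul]
        refine ⟨(⟨(j : B) * x, fun c => ?_⟩ : J) ⊗ₜ[k] (b * y), ?_⟩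
        · rw [mul_assoc (j : B) x c]; exact j.2 (x * c)
        · rw [LinearMap.rTensor_tmul]; rfl
  let I : TwoSidedIdeal (B ⊗[k] Bᵐᵒᵖ) := TwoSidedIdeal.mk' (W : Set (B ⊗[k] Bᵐᵒᵖ))
    (Submodule.zero_mem W) (fun ha hb => Submodule.add_mem W ha hb)
    (fun ha => Submodule.neg_mem W ha)
    (fun {x y} hy => hW_left y hy x)
    (fun {x y} hx => hW_right x hx y)
  have hmemI : ∀ t, t ∈ I ↔ t ∈ W := fun t => TwoSidedIdeal.mem_mk' _ _ _ _ _ _ t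
  rcases IsSimpleRing.simple.eq_bot_or_eq_top I with hI | hI
  · have : u ⊗ₜ[k] (1 : Bᵐᵒᵖ) ∈ I := by
      rw [hmemI]
      exact ⟨(⟨u, huJ⟩ : J) ⊗ₜ[k] (1 : Bᵐᵒᵖ), by rw [LinearMap.rTensor_tmul]; rfl⟩
    rw [hI, TwoSidedIdeal.mem_bot] at this
    exact tmul_one_ne_zero (k := k) hu0 this
  · have h1I : (1 : B ⊗[k] Bᵐᵒᵖ) ∈ I := by rw [hI]; exact TwoSidedIdeal.mem_top _
    rw [hmemI] at h1I
    obtain ⟨ξ, hξ⟩ := h1I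
    have hF : (TensorProduct.lid k Bᵐᵒᵖ) ((f.rTensor Bᵐᵒᵖ) (1 : B ⊗[k] Bᵐᵒᵖ)) = f 1 • 1 := by
      rw [Algebra.TensorProduct.one_def, LinearMap.rTensor_tmul, TensorProduct.lid_tmul]
    have hF0 : (f.rTensor Bᵐᵒᵖ) ((J.subtype.rTensor Bᵐᵒᵖ) ξ) = 0 := by
      rw [← LinearMap.rTensor_comp_apply, hfJ, LinearMap.rTensor_zero, LinearMap.zero_apply]
    rw [hξ] at hF0
    rw [hF0, map_zero] at hF
    have : f 1 • (1 : Bᵐᵒᵖ) ≠ 0 := by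
      intro h
      have h2 : ((f 1)⁻¹ * f 1) • (1 : Bᵐᵒᵖ) = 0 := by rw [mul_smul, h, smul_zero]
      rw [inv_mul_cancel₀ hf1, one_smul] at h2
      exact one_ne_zero h2
    exact this hF.symm
end FieldLemmas

set_option maxHeartbeats 2000000 in
set_option synthInstance.maxHeartbeats 400000 in
/-- Let `R` be a commutative ring, `p ⊂ R` a prime ideal, `A` an Azumaya
`R`-algebra, and `Ā = A/pA` (encoded as an `R`-algebra `Abar` equipped with a surjection
`π : A → Abar` whose kernel is the ideal `pA` generated by the image of `p`). If
`N ⊆ Ā` is a nonzero finitely generated left `Ā`-submodule, then the annihilator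
`{x ∈ Ā : xN = 0}` is zero. -/
theorem statement7 {R : Type u} [CommRing R] (p : Ideal R) (hp : p.IsPrime)
    {A : Type v} [Ring A] [Algebra R A] (hA : IsAzumayaAlg R A)
    {Abar : Type v} [Ring Abar] [Algebra R Abar]
    (π : A →ₐ[R] Abar) (hsurj : Function.Surjective π)
    (hker : RingHom.ker π.toRingHom = Ideal.span (algebraMap R A '' (p : Set R)))
    (N : Submodule Abar Abar) (hfg : N.FG) (hN : N ≠ ⊥) :
    ∀ x : Abar, (∀ n ∈ N, x * n = 0) → x = 0 := by
  classical
  obtain ⟨hfin, hproj, _hfaith, ⟨e⟩⟩ := hA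
  haveI := hfin
  haveI := hproj
  haveI := hp
  intro x hx
  -- set up the residue field at `p`
  let R' : Type u := Localization.AtPrime p
  let k : Type u := IsLocalRing.ResidueField R'
  have hkerk : RingHom.ker (algebraMap R k) = p := by
    have h1 : algebraMap R k = (algebraMap R' k).comp (algebraMap R R') :=
      IsScalarTower.algebraMap_eq R R' k
    rw [h1, ← RingHom.comap_ker]
    have h2 : RingHom.ker (algebraMap R' k) = IsLocalRing.maximalIdeal R' := by
      rw [IsLocalRing.ResidueField.algebraMap_eq]
      exact Ideal.mk_ker
    rw [h2]
    exact Localization.AtPrime.comap_maximalIdeal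
  let B : Type (max u v) := k ⊗[R] A
  let ρ : A →ₐ[R] B := Algebra.TensorProduct.includeRight
  have hkerρ : ∀ a : A, ρ a = 0 ↔ a ∈ RingHom.ker π.toRingHom := by
    intro a
    rw [hker]
    show (1:k) ⊗ₜ[R] a = 0 ↔ _
    exact (one_tmul_eq_zero_iff p hkerk a).trans (mem_span_algebraMap_image_iff p a).symm
  -- pick a nonzero element of N and a preimage
  obtain ⟨y, hyN, hy0⟩ := (Submodule.ne_bot_iff N).mp hN
  obtain ⟨m, rfl⟩ := hsurj y
  obtain ⟨a, rfl⟩ := hsurj x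
  have hannih : ∀ c : A, a * c * m ∈ RingHom.ker π.toRingHom := by
    intro c
    have hmem : π c * π m ∈ N := by
      have := N.smul_mem (π c) hyN
      simpa [smul_eq_mul] using this
    show π (a * c * m) = 0
    rw [map_mul, map_mul, mul_assoc]
    exact hx _ hmem
  have hw : ρ m ≠ 0 := by
    intro h
    exact hy0 ((hkerρ m).mp h)
  have hub : ∀ b : B, ρ a * b * ρ m = 0 := by
    intro b
    induction b using TensorProduct.induction_on with
    | zero => rw [mul_zero, zero_mul]
    | add b₁ b₂ h₁ h₂ => rw [mul_add, add_mul, h₁, h₂, add_zero]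
    | tmul lam c =>
      have hsp : (lam ⊗ₜ[R] c : B) = lam • ρ c := by
        show _ = lam • ((1:k) ⊗ₜ[R] c)
        rw [TensorProduct.smul_tmul', smul_eq_mul, mul_one]
      rw [hsp, mul_smul_comm, smul_mul_assoc, ← map_mul, ← map_mul,
        (hkerρ _).mpr (hannih c), smul_zero]
  haveI : Nontrivial B := nontrivial_of_ne (ρ m) 0 hw
  -- simplicity of `B ⊗[k] Bᵐᵒᵖ`
  haveI : Module.FinitePresentation R A := Module.finitePresentation_of_projective R A
  let A₁ : Type (max u v) := R' ⊗[R] A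
  haveI : Module.Free R' A₁ := Module.free_of_flat_of_isLocalRing
  let n := Module.Free.ChooseBasisIndex R' A₁
  let b : Module.Basis n R' A₁ := Module.Free.chooseBasis R' A₁
  let E := Module.End R A
  letI : Algebra k kᵐᵒᵖ := MulOpposite.instAlgebra
  let step1 : Bᵐᵒᵖ ≃ₐ[k] k ⊗[R] Aᵐᵒᵖ :=
    (Algebra.TensorProduct.opAlgEquiv R k k A).symm.trans
      (Algebra.TensorProduct.congr (AlgEquiv.toOpposite k k).symm AlgEquiv.refl)
  let full : (B ⊗[k] Bᵐᵒᵖ) ≃+* Matrix n n k :=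
    (Algebra.TensorProduct.congr (AlgEquiv.refl (R := k) (A₁ := B)) step1).toRingEquiv.trans <|
    (cancelAlgEquiv R k B Aᵐᵒᵖ).toRingEquiv.trans <|
    (Algebra.TensorProduct.assoc R R k k A Aᵐᵒᵖ).toRingEquiv.trans <|
    (Algebra.TensorProduct.congr (AlgEquiv.refl (R := k) (A₁ := k)) e).toRingEquiv.trans <|
    (cancelAlgEquiv R R' k E).symm.toRingEquiv.trans <|
    (Algebra.TensorProduct.congr (AlgEquiv.refl (R := k) (A₁ := k))
      (endBaseChangeEquiv p.primeCompl R' A)).toRingEquiv.trans <|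
    (Algebra.TensorProduct.congr (AlgEquiv.refl (R := k) (A₁ := k))
      (algEquivMatrix b)).toRingEquiv.trans <|
    (matrixEquivTensor n R' k).symm.toRingEquiv
  haveI : Nontrivial (B ⊗[k] Bᵐᵒᵖ) :=
    nontrivial_of_ne ((1:B) ⊗ₜ[k] (1:Bᵐᵒᵖ)) 0 (tmul_one_ne_zero (k := k) one_ne_zero)
  haveI : Nonempty n := by
    by_contra hne
    haveI : IsEmpty n := not_nonempty_iff.mp hne
    haveI : Subsingleton (Matrix n n k) := inferInstance
    haveI : Subsingleton (B ⊗[k] Bᵐᵒᵖ) := full.toEquiv.subsingleton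
    exact false_of_nontrivial_of_subsingleton (B ⊗[k] Bᵐᵒᵖ)
  haveI : IsSimpleRing (Matrix n n k) := inferInstance
  haveI : IsSimpleRing (B ⊗[k] Bᵐᵒᵖ) := isSimpleRing_of_ringEquiv full
  have hρa : ρ a = 0 := eq_zero_of_forall_mul_mul_eq_zero (k := k) hw hub
  exact (hkerρ a).mp hρa
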